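/- Let S be a finite set of vectors in ℝᵈ partitioned into nonempty sets G and Q, let V(S) be the sample covariance matrix of S, and let P be any orthogonal projection matrix on ℝᵈ. Then the largest eigenvalue of (I−P)V(S)(I−P) is at least (|G|/|S|)·‖(I−P)(μ(G)−μ(S))‖₂². -/

import Mathlib

/-- Sample mean of the vectors `y i` for `i` in a finite set `T`. -/
noncomputable def sampleMean {ι : Type*} {d : ℕ} (y : ι → Fin d → ℝ) (T : Finset ι) :
    Fin d → ℝ :=
  (T.card : ℝ)⁻¹ • ∑ i ∈ T, y i

/-- Sample covariance matrix of the vectors `y i` for `i` in a finite set `T`. -/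
noncomputable def sampleCov {ι : Type*} {d : ℕ} (y : ι → Fin d → ℝ) (T : Finset ι) :
    Matrix (Fin d) (Fin d) ℝ :=
  (T.card : ℝ)⁻¹ • ∑ i ∈ T,
    Matrix.vecMulVec (y i - sampleMean y T) (y i - sampleMean y T)

open Matrix Finset

private lemma sum_mulVec' {ι : Type*} {d : ℕ} (T : Finset ι) (M : ι → Matrix (Fin d) (Fin d) ℝ)
    (x : Fin d → ℝ) : (∑ i ∈ T, M i) *ᵥ x = ∑ i ∈ T, (M i) *ᵥ x := by
  ext j
  simp [Matrix.mulVec, dotProduct, Matrix.sum_apply, Finset.sum_mul]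
  exact Finset.sum_comm

private lemma sum_dot' {ι : Type*} {d : ℕ} (T : Finset ι) (f : ι → Fin d → ℝ) (x : Fin d → ℝ) :
    (∑ i ∈ T, f i) ⬝ᵥ x = ∑ i ∈ T, f i ⬝ᵥ x := by
  simp [dotProduct, Finset.sum_apply, Finset.sum_mul]
  exact Finset.sum_comm

private lemma dot_sum' {ι : Type*} {d : ℕ} (T : Finset ι) (f : ι → Fin d → ℝ) (x : Fin d → ℝ) :
    x ⬝ᵥ (∑ i ∈ T, f i) = ∑ i ∈ T, x ⬝ᵥ f i := by
  simp [dotProduct, Finset.sum_apply, Finset.mul_sum]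
  exact Finset.sum_comm

private lemma dot_vecMulVec {d : ℕ} (a b x : Fin d → ℝ) :
    x ⬝ᵥ (Matrix.vecMulVec a b) *ᵥ x = (a ⬝ᵥ x) * (b ⬝ᵥ x) := by
  simp only [dotProduct, Matrix.mulVec, Matrix.vecMulVec_apply, dotProduct,
    Finset.sum_mul, Finset.mul_sum]
  rw [Finset.sum_comm]
  congr 1; ext j; congr 1; ext i; ring

private lemma rayleigh_le {d : ℕ} {A : Matrix (Fin d) (Fin d) ℝ} (hA : A.IsHermitian)
    (x : Fin d → ℝ) : x ⬝ᵥ A *ᵥ x ≤ (⨆ i, hA.eigenvalues i) * (x ⬝ᵥ x) := by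
  set U : Matrix (Fin d) (Fin d) ℝ := (hA.eigenvectorUnitary : Matrix (Fin d) (Fin d) ℝ) with hU
  have hUU : U * star U = 1 := (Matrix.mem_unitaryGroup_iff).mp hA.eigenvectorUnitary.2
  set z : Fin d → ℝ := (star U) *ᵥ x with hz
  have hstar : star U = Uᵀ := by
    rw [Matrix.star_eq_conjTranspose, Matrix.conjTranspose_eq_transpose_of_trivial]
  have hxz : x ᵥ* U = z := by
    rw [hz, hstar, ← Matrix.vecMul_transpose, Matrix.transpose_transpose]
  have hA' : A = U * Matrix.diagonal hA.eigenvalues * star U := by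
    have := hA.spectral_theorem
    simpa [RCLike.ofReal_real_eq_id] using this
  have key : x ⬝ᵥ A *ᵥ x = ∑ i, hA.eigenvalues i * z i ^ 2 := by
    calc x ⬝ᵥ A *ᵥ x = x ⬝ᵥ (U * Matrix.diagonal hA.eigenvalues * star U) *ᵥ x := by rw [← hA']
    _ = ∑ i, hA.eigenvalues i * z i ^ 2 := by
        rw [← Matrix.mulVec_mulVec, ← Matrix.mulVec_mulVec, Matrix.dotProduct_mulVec, hxz]
        simp only [dotProduct, Matrix.mulVec_diagonal]
        congr 1; ext i; ring
  have hzz : z ⬝ᵥ z = x ⬝ᵥ x := by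
    rw [hz, Matrix.dotProduct_mulVec, hstar, Matrix.vecMul_transpose,
      Matrix.mulVec_mulVec, ← hstar, hUU, Matrix.one_mulVec]
  have hbdd : BddAbove (Set.range hA.eigenvalues) := (Set.finite_range _).bddAbove
  have hle : ∀ i, hA.eigenvalues i ≤ ⨆ j, hA.eigenvalues j := fun i => le_ciSup hbdd i
  calc x ⬝ᵥ A *ᵥ x = ∑ i, hA.eigenvalues i * z i ^ 2 := key
    _ ≤ ∑ i, (⨆ j, hA.eigenvalues j) * z i ^ 2 := by
        refine Finset.sum_le_sum fun i _ => mul_le_mul_of_nonneg_right (hle i) (sq_nonneg _)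
    _ = (⨆ j, hA.eigenvalues j) * (z ⬝ᵥ z) := by
        rw [← Finset.mul_sum]; congr 1; simp [dotProduct, sq]
    _ = (⨆ j, hA.eigenvalues j) * (x ⬝ᵥ x) := by rw [hzz]

theorem projected_cov_top_eigenvalue_lower_bound {ι : Type*} [DecidableEq ι] {d : ℕ}
    (y : ι → Fin d → ℝ) (S G Q : Finset ι) (hdisj : Disjoint G Q) (hS : S = G ∪ Q)
    (hG : G.Nonempty) (hQ : Q.Nonempty)
    (P : Matrix (Fin d) (Fin d) ℝ) (hPsym : P.IsHermitian) (hPproj : P * P = P)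
    (hHerm : ((1 - P) * sampleCov y S * (1 - P)).IsHermitian) :
    ((G.card : ℝ) / (S.card : ℝ)) *
        (∑ j, ((1 - P).mulVec (sampleMean y G - sampleMean y S) j) ^ 2) ≤
      ⨆ i, hHerm.eigenvalues i := by
  set V := sampleCov y S with hV
  set μS := sampleMean y S with hμS
  set μG := sampleMean y G with hμG
  set w : Fin d → ℝ := μG - μS with hwdef
  set u : Fin d → ℝ := (1 - P) *ᵥ w with hu
  set L := ⨆ i, hHerm.eigenvalues i with hL
  -- basic projection facts
  have hQsym : ((1 : Matrix (Fin d) (Fin d) ℝ) - P).IsHermitian := (Matrix.isHermitian_one).sub hPsym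
  have hQt : ((1 : Matrix (Fin d) (Fin d) ℝ) - P)ᵀ = 1 - P := by
    rw [← Matrix.conjTranspose_eq_transpose_of_trivial]; exact hQsym
  have hidem : ((1 : Matrix (Fin d) (Fin d) ℝ) - P) * (1 - P) = 1 - P := by
    rw [sub_mul, one_mul, mul_sub, mul_one, hPproj]; abel
  have hfix : (1 - P) *ᵥ u = u := by
    rw [hu, Matrix.mulVec_mulVec, hidem]
  have hdotx : ∀ x v : Fin d → ℝ, x ⬝ᵥ (1 - P) *ᵥ v = ((1 - P) *ᵥ x) ⬝ᵥ v := by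
    intro x v
    rw [Matrix.dotProduct_mulVec]
    congr 1
    rw [← Matrix.mulVec_transpose, hQt]
  have hdot : ∀ v : Fin d → ℝ, u ⬝ᵥ (1 - P) *ᵥ v = u ⬝ᵥ v := by
    intro v
    rw [hdotx, hfix]
  -- quadratic form of sampleCov
  have hScard : (0 : ℝ) < S.card := by
    have hne : S.Nonempty := ⟨hG.choose, by rw [hS]; exact Finset.mem_union_left _ hG.choose_spec⟩
    exact_mod_cast Finset.card_pos.mpr hne
  have hGcard : (0 : ℝ) < G.card := by exact_mod_cast Finset.card_pos.mpr hG
  have hquad : ∀ x : Fin d → ℝ,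
      x ⬝ᵥ V *ᵥ x = (S.card : ℝ)⁻¹ * ∑ i ∈ S, ((y i - μS) ⬝ᵥ x) ^ 2 := by
    intro x
    rw [hV]
    unfold sampleCov
    rw [Matrix.smul_mulVec, dotProduct_smul, sum_mulVec']
    rw [smul_eq_mul]
    congr 1
    rw [dot_sum']
    refine Finset.sum_congr rfl fun i _ => ?_
    rw [dot_vecMulVec, sq]
  -- u M u = u V u
  have hMu : ∀ x : Fin d → ℝ, x ⬝ᵥ ((1 - P) * V * (1 - P)) *ᵥ x
      = ((1 - P) *ᵥ x) ⬝ᵥ V *ᵥ ((1 - P) *ᵥ x) := by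
    intro x
    rw [← Matrix.mulVec_mulVec, ← Matrix.mulVec_mulVec, hdotx]
  -- positivity of M, hence 0 ≤ L
  have hVpos : ∀ x : Fin d → ℝ, 0 ≤ x ⬝ᵥ V *ᵥ x := by
    intro x
    rw [hquad]
    exact mul_nonneg (by positivity) (Finset.sum_nonneg fun i _ => sq_nonneg _)
  have hMpsd : ((1 - P) * V * (1 - P)).PosSemidef := by
    refine Matrix.PosSemidef.of_dotProduct_mulVec_nonneg hHerm fun x => ?_
    have : star x = x := rfl
    rw [this, hMu]
    exact hVpos _
  have hLnonneg : 0 ≤ L := by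
    rcases isEmpty_or_nonempty (Fin d) with h | h
    · rw [hL, Real.iSup_of_isEmpty]
    · have i0 : Fin d := h.some
      have h1 : 0 ≤ hHerm.eigenvalues i0 := hMpsd.eigenvalues_nonneg i0
      have h2 : hHerm.eigenvalues i0 ≤ L :=
        le_ciSup ((Set.finite_range _).bddAbove) i0
      linarith
  -- sum over G
  have hsumG : ∑ i ∈ G, (y i - μS) ⬝ᵥ u = (G.card : ℝ) * (w ⬝ᵥ u) := by
    have : ∑ i ∈ G, (y i - μS) = (G.card : ℝ) • w := by
      rw [hwdef, hμG]
      unfold sampleMean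
      rw [smul_sub, smul_smul, mul_inv_cancel₀ (ne_of_gt hGcard), one_smul]
      rw [Finset.sum_sub_distrib, Finset.sum_const]
      simp [← Nat.cast_smul_eq_nsmul ℝ]
    rw [← sum_dot', this, smul_dotProduct, smul_eq_mul]
  -- Cauchy-Schwarz on G
  have hCS : (G.card : ℝ) * (w ⬝ᵥ u) ^ 2 ≤ ∑ i ∈ G, ((y i - μS) ⬝ᵥ u) ^ 2 := by
    have h1 := sq_sum_le_card_mul_sum_sq (s := G) (f := fun i => (y i - μS) ⬝ᵥ u)
    rw [hsumG, mul_pow] at h1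
    have h2 : (G.card : ℝ) * ((G.card : ℝ) * (w ⬝ᵥ u) ^ 2)
        ≤ (G.card : ℝ) * ∑ i ∈ G, ((y i - μS) ⬝ᵥ u) ^ 2 := by
      push_cast at h1 ⊢
      nlinarith [h1]
    exact le_of_mul_le_mul_left h2 hGcard
  -- main lower bound on u V u
  have hwu : w ⬝ᵥ u = u ⬝ᵥ u := by
    have h := hdot w
    rw [← hu] at h
    rw [dotProduct_comm]
    exact h.symm
  have hmain : ((G.card : ℝ) / (S.card : ℝ)) * (u ⬝ᵥ u) ^ 2 ≤ u ⬝ᵥ V *ᵥ u := by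
    rw [hquad]
    have hsub : ∑ i ∈ G, ((y i - μS) ⬝ᵥ u) ^ 2 ≤ ∑ i ∈ S, ((y i - μS) ⬝ᵥ u) ^ 2 := by
      apply Finset.sum_le_sum_of_subset_of_nonneg
      · rw [hS]; exact Finset.subset_union_left
      · intro i _ _; exact sq_nonneg _
    have := hCS.trans hsub
    rw [hwu] at this
    rw [div_eq_inv_mul, mul_assoc]
    exact mul_le_mul_of_nonneg_left this (by positivity)
  -- Rayleigh bound
  have hray : u ⬝ᵥ ((1 - P) * V * (1 - P)) *ᵥ u ≤ L * (u ⬝ᵥ u) := rayleigh_le hHerm u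
  have huVu : u ⬝ᵥ V *ᵥ u ≤ L * (u ⬝ᵥ u) := by
    rw [hMu, hfix] at hray
    exact hray
  -- conclude
  have hsumsq : ∑ j, u j ^ 2 = u ⬝ᵥ u := by
    simp [dotProduct, sq]
  rw [hsumsq]
  have hnn : (0:ℝ) ≤ u ⬝ᵥ u := Finset.sum_nonneg (fun j _ => mul_self_nonneg _)
  rcases eq_or_lt_of_le hnn with h0 | hpos
  · rw [← h0, mul_zero]; exact hLnonneg
  · have hkey : ((G.card : ℝ) / (S.card : ℝ)) * (u ⬝ᵥ u) ^ 2 ≤ L * (u ⬝ᵥ u) :=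
      hmain.trans huVu
    have : ((G.card : ℝ) / (S.card : ℝ)) * (u ⬝ᵥ u) * (u ⬝ᵥ u) ≤ L * (u ⬝ᵥ u) := by
      rw [mul_assoc, ← sq]; exact hkey
    exact le_of_mul_le_mul_right this hpos
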